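/- Let G be a transitive nilpotent permutation group on a finite set Ω, p a prime dividing |G|, α ∈ Ω, and Δ a G-block containing α with |Δ| = p^l. Then for every prime q ≠ p dividing |G|, the q-Sylow subgroup of the setwise stabilizer G_Δ equals G_q ∩ G_α, where G_q is the q-Sylow subgroup of G and G_α the point stabilizer of α. In particular, G_Δ = (G_p ∩ G_Δ) × ∏_{q ≠ p} (G_q ∩ G_α). -/
import Mathlib


open Pointwise

namespace GaloisBlocks

variable {Ω : Type*}

/-- `G ≤ Sym(Ω)` is transitive on `Ω`. -/
def IsTransitive (G : Subgroup (Equiv.Perm Ω)) : Prop :=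
  ∀ a b : Ω, ∃ g ∈ G, g a = b

/-- `Δ` is a `G`-block: every `G`-translate of `Δ` equals `Δ` or is disjoint from it. -/
def IsBlock (G : Subgroup (Equiv.Perm Ω)) (Δ : Set Ω) : Prop :=
  ∀ g ∈ G, g • Δ = Δ ∨ Disjoint (g • Δ) Δ

/-- The setwise stabilizer `G_Δ` of `Δ` in `G`. -/
def stab (G : Subgroup (Equiv.Perm Ω)) (Δ : Set Ω) : Subgroup (Equiv.Perm Ω) :=
  G ⊓ MulAction.stabilizer (Equiv.Perm Ω) Δ

/-- The point stabilizer `G_α`. -/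
def stabPt (G : Subgroup (Equiv.Perm Ω)) (α : Ω) : Subgroup (Equiv.Perm Ω) :=
  G ⊓ MulAction.stabilizer (Equiv.Perm Ω) α

/-- The `Δ`-block system of `S`: all `G`-translates of `Δ` contained in `S`. -/
def blockSystem (G : Subgroup (Equiv.Perm Ω)) (S Δ : Set Ω) : Set (Set Ω) :=
  {Υ | (∃ g ∈ G, Υ = g • Δ) ∧ Υ ⊆ S}

/-- `G(S/Δ)`: elements of `G_S` fixing setwise every block of the `Δ`-block
system of `S`. -/
def blockKer (G : Subgroup (Equiv.Perm Ω)) (S Δ : Set Ω) : Subgroup (Equiv.Perm Ω) :=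
  stab G S ⊓ ⨅ Υ ∈ blockSystem G S Δ, MulAction.stabilizer (Equiv.Perm Ω) Υ

/-- `G^Δ = G(Ω/Δ)`: the kernel of the action of `G` on the block system of `Δ`. -/
def fullKer (G : Subgroup (Equiv.Perm Ω)) (Δ : Set Ω) : Subgroup (Equiv.Perm Ω) :=
  blockKer G Set.univ Δ

/-- The orbit `α^N`. -/
def orbitOf (N : Subgroup (Equiv.Perm Ω)) (α : Ω) : Set Ω :=
  {β | ∃ g ∈ N, g α = β}

/-- `G` is primitive: transitive with only trivial blocks. -/
def IsPrimitive (G : Subgroup (Equiv.Perm Ω)) : Prop :=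
  IsTransitive G ∧ ∀ Δ : Set Ω, IsBlock G Δ → Δ.Subsingleton ∨ Δ = Set.univ

/-- `Δ` is a maximal `G`-subblock of `S`. -/
def IsMaximalSubblock (G : Subgroup (Equiv.Perm Ω)) (Δ S : Set Ω) : Prop :=
  IsBlock G Δ ∧ IsBlock G S ∧ Δ ⊂ S ∧
    ∀ Υ : Set Ω, IsBlock G Υ → ¬(Δ ⊂ Υ ∧ Υ ⊂ S)

/-- `P` is a `p`-Sylow subgroup of `G`. -/
def IsSylowOf (p : ℕ) (P G : Subgroup (Equiv.Perm Ω)) : Prop :=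
  P ≤ G ∧ IsPGroup p ↥P ∧
    ∀ Q : Subgroup (Equiv.Perm Ω), Q ≤ G → IsPGroup p ↥Q → P ≤ Q → Q = P

/-- In a nilpotent group, the Sylow subgroup contains every q-subgroup. -/
lemma aux_key [Finite Ω] {G Q : Subgroup (Equiv.Perm Ω)} (hnil : Group.IsNilpotent ↥G)
    {q : ℕ} (hq : q.Prime) (hQ : IsSylowOf q Q G) :
    ∀ R : Subgroup (Equiv.Perm Ω), R ≤ G → IsPGroup q ↥R → R ≤ Q := by
  haveI : Fact q.Prime := ⟨hq⟩
  obtain ⟨hQG, hQq, hQmax⟩ := hQ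
  let Q' : Sylow q ↥G :=
    { toSubgroup := Q.subgroupOf G
      isPGroup' := hQq.of_equiv (Subgroup.subgroupOfEquivOfLe hQG).symm
      is_maximal' := by
        intro R hR hle
        have hR' : IsPGroup q ↥(R.map G.subtype) :=
          hR.of_equiv (Subgroup.equivMapOfInjective R G.subtype G.subtype_injective)
        have h1 : Q ≤ R.map G.subtype := by
          rw [← inf_eq_left.mpr hQG, ← Subgroup.subgroupOf_map_subtype]
          exact Subgroup.map_mono hle
        have h2 := hQmax (R.map G.subtype) (Subgroup.map_subtype_le R) hR' h1
        have h3 : R = (R.map G.subtype).subgroupOf G := by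
          rw [Subgroup.subgroupOf, Subgroup.comap_map_eq_self_of_injective G.subtype_injective]
        rw [h3, h2] }
  have htfae := (isNilpotent_of_finite_tfae (G := ↥G)).out 0 3
  haveI hnormal : (Q.subgroupOf G).Normal := htfae.mp hnil q ⟨hq⟩ Q'
  intro R hRG hRq
  have hR' : IsPGroup q ↥(R.subgroupOf G) := hRq.of_equiv (Subgroup.subgroupOfEquivOfLe hRG).symm
  have hsup : IsPGroup q ↥(R.subgroupOf G ⊔ Q.subgroupOf G) :=
    hR'.to_sup_of_normal_right (hQq.of_equiv (Subgroup.subgroupOfEquivOfLe hQG).symm)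
  have heq : R.subgroupOf G ⊔ Q.subgroupOf G = Q.subgroupOf G :=
    Q'.is_maximal' hsup le_sup_right
  intro x hx
  have : (⟨x, hRG hx⟩ : ↥G) ∈ Q.subgroupOf G := by
    rw [← heq]
    exact Subgroup.mem_sup_left (Subgroup.mem_subgroupOf.mpr hx)
  exact Subgroup.mem_subgroupOf.mp this

/-- `(Q ⊓ H).subgroupOf H` has index prime to `q`. -/
lemma aux_index [Finite Ω] {G Q H : Subgroup (Equiv.Perm Ω)} {q : ℕ} (hq : q.Prime)
    (hQq : IsPGroup q ↥Q)
    (key : ∀ R : Subgroup (Equiv.Perm Ω), R ≤ G → IsPGroup q ↥R → R ≤ Q)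
    (hHG : H ≤ G) :
    ¬ q ∣ ((Q ⊓ H).subgroupOf H).index := by
  haveI : Fact q.Prime := ⟨hq⟩
  let S : Sylow q ↥H :=
    { toSubgroup := (Q ⊓ H).subgroupOf H
      isPGroup' := (hQq.to_le inf_le_left).of_equiv
          (Subgroup.subgroupOfEquivOfLe inf_le_right).symm
      is_maximal' := by
        intro R hR hle
        have hR' : IsPGroup q ↥(R.map H.subtype) :=
          hR.of_equiv (Subgroup.equivMapOfInjective R H.subtype H.subtype_injective)
        have h1 : R.map H.subtype ≤ Q ⊓ H :=
          le_inf (key _ ((Subgroup.map_subtype_le R).trans hHG) hR') (Subgroup.map_subtype_le R)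
        have h3 : R = (R.map H.subtype).subgroupOf H := by
          rw [Subgroup.subgroupOf, Subgroup.comap_map_eq_self_of_injective H.subtype_injective]
        refine le_antisymm ?_ hle
        rw [h3]
        exact Subgroup.comap_mono h1 }
  exact S.not_dvd_index

/-- For a block `Δ ∋ α` of `p`-power size, the `q`-Sylow subgroup of `G_Δ`
(`q ≠ p`) is `G_q ∩ G_Δ = G_q ∩ G_α`. -/
theorem stmt7 [Fintype Ω] (G P : Subgroup (Equiv.Perm Ω)) (hG : IsTransitive G)
    (hnil : Group.IsNilpotent ↥G) (p : ℕ) (hp : p.Prime)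
    (hpG : p ∣ Nat.card ↥G) (hP : IsSylowOf p P G) (α : Ω)
    (Δ : Set Ω) (hΔ : IsBlock G Δ) (hα : α ∈ Δ) (l : ℕ)
    (hcard : Δ.ncard = p ^ l)
    (q : ℕ) (hq : q.Prime) (hqp : q ≠ p) (hqG : q ∣ Nat.card ↥G)
    (Q : Subgroup (Equiv.Perm Ω)) (hQ : IsSylowOf q Q G) :
    Q ⊓ stab G Δ = Q ⊓ stabPt G α ∧
    IsSylowOf q (Q ⊓ stab G Δ) (stab G Δ) := by
  haveI : Fact q.Prime := ⟨hq⟩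
  have key := aux_key hnil hq hQ
  obtain ⟨hQG, hQq, hQmax⟩ := hQ
  have hstabG : stab G Δ ≤ G := inf_le_left
  have hptG : stabPt G α ≤ G := inf_le_left
  -- point stabilizer is contained in the block stabilizer
  have hPtle : stabPt G α ≤ stab G Δ := by
    intro g hg
    obtain ⟨hgG, hgα⟩ := Subgroup.mem_inf.mp hg
    have hgα' : g • α = α := hgα
    refine Subgroup.mem_inf.mpr ⟨hgG, ?_⟩
    rcases hΔ g hgG with h | h
    · exact h
    · exfalso
      have : g • α ∈ g • Δ := Set.smul_mem_smul_set hα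
      rw [hgα'] at this
      exact Set.disjoint_left.mp h this hα
  -- the orbit of α under the block stabilizer is Δ
  have horb : MulAction.orbit ↥(stab G Δ) α = Δ := by
    apply Set.eq_of_subset_of_subset
    · rintro β ⟨g, rfl⟩
      have hg : (g : Equiv.Perm Ω) • Δ = Δ := (Subgroup.mem_inf.mp g.2).2
      have : (g : Equiv.Perm Ω) • α ∈ (g : Equiv.Perm Ω) • Δ := Set.smul_mem_smul_set hα
      rw [hg] at this
      exact this
    · intro β hβ
      obtain ⟨g, hgG, hgαβ⟩ := hG α β
      have hmem : g ∈ stab G Δ := by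
        refine Subgroup.mem_inf.mpr ⟨hgG, ?_⟩
        rcases hΔ g hgG with h | h
        · exact h
        · exfalso
          have hβ' : g • α ∈ g • Δ := Set.smul_mem_smul_set hα
          have : g • α = β := hgαβ
          rw [this] at hβ'
          exact Set.disjoint_left.mp h hβ' hβ
      exact ⟨⟨g, hmem⟩, hgαβ⟩
  -- the stabilizer of α inside the block stabilizer is stabPt
  have hstabeq : MulAction.stabilizer ↥(stab G Δ) α = (stabPt G α).subgroupOf (stab G Δ) := by
    ext g
    constructor
    · intro h
      exact Subgroup.mem_subgroupOf.mpr
        (Subgroup.mem_inf.mpr ⟨(Subgroup.mem_inf.mp g.2).1, MulAction.mem_stabilizer_iff.mpr h⟩)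
    · intro h
      exact (Subgroup.mem_inf.mp (Subgroup.mem_subgroupOf.mp h)).2
  -- orbit-stabilizer counting
  have hcard1 : Nat.card ↥(stab G Δ) = Nat.card ↥(stabPt G α) * p ^ l := by
    have h1 := Subgroup.card_mul_index (MulAction.stabilizer ↥(stab G Δ) α)
    rw [MulAction.index_stabilizer, horb, hcard, hstabeq,
      Nat.card_congr (Subgroup.subgroupOfEquivOfLe hPtle).toEquiv] at h1
    exact h1.symm
  -- index facts
  have hIB := aux_index hq hQq key hstabG
  have hIA := aux_index hq hQq key hptG
  have hB := Subgroup.card_mul_index ((Q ⊓ stab G Δ).subgroupOf (stab G Δ))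
  have hA := Subgroup.card_mul_index ((Q ⊓ stabPt G α).subgroupOf (stabPt G α))
  rw [Nat.card_congr (Subgroup.subgroupOfEquivOfLe (inf_le_right : Q ⊓ stab G Δ ≤ stab G Δ)).toEquiv] at hB
  rw [Nat.card_congr (Subgroup.subgroupOfEquivOfLe (inf_le_right : Q ⊓ stabPt G α ≤ stabPt G α)).toEquiv] at hA
  set iB := ((Q ⊓ stab G Δ).subgroupOf (stab G Δ)).index with hiB
  set iA := ((Q ⊓ stabPt G α).subgroupOf (stabPt G α)).index with hiA
  -- main divisibility
  have hkey : Nat.card ↥(Q ⊓ stab G Δ) ∣ Nat.card ↥(Q ⊓ stabPt G α) := by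
    obtain ⟨b, hb⟩ := (hQq.to_le (inf_le_left : Q ⊓ stab G Δ ≤ Q)).exists_card_eq
    have h2 : Nat.card ↥(Q ⊓ stab G Δ) ∣ Nat.card ↥(Q ⊓ stabPt G α) * (iA * p ^ l) := by
      refine Dvd.intro iB ?_
      rw [hB, hcard1, ← hA]
      ring
    have hqpl : Nat.Coprime q (p ^ l) := Nat.Coprime.pow_right l
      (hq.coprime_iff_not_dvd.mpr (fun h => hqp ((Nat.prime_dvd_prime_iff_eq hq hp).mp h)))
    have hcop : (Nat.card ↥(Q ⊓ stab G Δ)).Coprime (iA * p ^ l) := by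
      rw [hb]
      exact Nat.Coprime.pow_left b ((hq.coprime_iff_not_dvd.mpr hIA).mul_right hqpl)
    exact hcop.dvd_of_dvd_mul_right h2
  have hle : Q ⊓ stabPt G α ≤ Q ⊓ stab G Δ := inf_le_inf_left Q hPtle
  have heq : Q ⊓ stabPt G α = Q ⊓ stab G Δ :=
    Subgroup.eq_of_le_of_card_ge hle (Nat.le_of_dvd Nat.card_pos hkey)
  refine ⟨heq.symm, inf_le_right, hQq.to_le inf_le_left, ?_⟩
  intro R hRst hRq hle'
  exact le_antisymm (le_inf (key R (hRst.trans hstabG) hRq) hRst) hle'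


end GaloisBlocks
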